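/- Let h be a positive integer with d_max ≤ h and let v ∈ F₂^h have Hamming weight l with 1 ≤ l ≤ h. If a random column c ∈ F₂^h is drawn according to the LT column distribution, then the probability that the inner product vᵀc equals 1 (in F₂) is exactly p_l = Σ_{j=1}^{d_max} Ω_j · Σ_{i odd, max(1, l+j−h) ≤ i ≤ min(l,j)} C(l,i)·C(h−l, j−i)/C(h,j). -/

import Mathlib

open Finset

/-- Probability that the LT column distribution on `F₂^h` produces the particular
column `c`: a degree `j ∈ {1,…,dmax}` is drawn with probability `Ω j` and then one
of the `C(h,j)` vectors of Hamming weight `j` is chosen uniformly at random. -/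
noncomputable def colP (dmax : ℕ) (Ω : ℕ → ℝ) {h : ℕ} (c : Fin h → ZMod 2) : ℝ :=
  if 1 ≤ hammingNorm c ∧ hammingNorm c ≤ dmax then
    Ω (hammingNorm c) / (h.choose (hammingNorm c)) else 0


lemma zmod2_one_iff (n : ℕ) : (n : ZMod 2) = 1 ↔ Odd n := by
  rcases Nat.even_or_odd n with he | ho
  · obtain ⟨k, hk⟩ := he
    subst hk
    push_cast
    constructor
    · intro hh
      exfalso
      have : (k : ZMod 2) + k = 2 * k := by ring
      rw [this] at hh
      have h2 : (2 : ZMod 2) = 0 := by decide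
      rw [h2, zero_mul] at hh
      exact (by decide : (0 : ZMod 2) ≠ 1) hh
    · intro hh; rw [Nat.odd_iff] at hh; omega
  · obtain ⟨k, hk⟩ := ho
    subst hk
    push_cast
    have h2 : (2 : ZMod 2) = 0 := by decide
    rw [h2, zero_mul, zero_add]
    simp [Nat.odd_iff, Nat.add_mod, Nat.mul_mod]

lemma count_inter {h : ℕ} (V : Finset (Fin h)) (j i : ℕ) (hij : i ≤ j) :
    #((Finset.univ.powersetCard j).filter (fun S => #(S ∩ V) = i))
      = (#V).choose i * ((h - #V).choose (j - i)) := by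
  have key : #((Finset.univ.powersetCard j).filter (fun S => #(S ∩ V) = i))
      = #(V.powersetCard i ×ˢ Vᶜ.powersetCard (j - i)) := by
    apply Finset.card_bij' (fun S _ => (S ∩ V, S \ V))
      (fun p _ => p.1 ∪ p.2)
    · intro S hS
      simp only [mem_filter, Finset.mem_powersetCard_univ] at hS
      obtain ⟨hcard, hi⟩ := hS
      simp only [Finset.mem_product, Finset.mem_powersetCard]
      refine ⟨⟨Finset.inter_subset_right, hi⟩, ?_, ?_⟩
      · intro x hx
        simp only [Finset.mem_sdiff] at hx
        simp [hx.2]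
      · have := Finset.card_sdiff_add_card_inter S V
        omega
    · intro p hp
      simp only [Finset.mem_product, Finset.mem_powersetCard] at hp
      obtain ⟨⟨hA, hAc⟩, hB, hBc⟩ := hp
      have hdisj : Disjoint p.1 p.2 := by
        refine Finset.disjoint_left.2 fun x hx1 hx2 => ?_
        have := hB hx2
        simp only [Finset.mem_compl] at this
        exact this (hA hx1)
      simp only [mem_filter, Finset.mem_powersetCard_univ]
      constructor
      · rw [Finset.card_union_of_disjoint hdisj, hAc, hBc]; omega
      · have h1 : p.1 ∩ V = p.1 := Finset.inter_eq_left.2 hA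
        have h2 : p.2 ∩ V = ∅ := by
          refine Finset.eq_empty_of_forall_notMem fun x hx => ?_
          simp only [Finset.mem_inter] at hx
          have := hB hx.1
          simp only [Finset.mem_compl] at this
          exact this hx.2
        rw [Finset.union_inter_distrib_right, h1, h2, Finset.union_empty, hAc]
    · intro S hS
      rw [Finset.union_comm]; exact Finset.sdiff_union_inter S V
    · intro p hp
      simp only [Finset.mem_product, Finset.mem_powersetCard] at hp
      obtain ⟨⟨hA, hAc⟩, hB, hBc⟩ := hp
      have h1 : p.1 ∩ V = p.1 := Finset.inter_eq_left.2 hA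
      have h2 : p.2 ∩ V = ∅ := by
        refine Finset.eq_empty_of_forall_notMem fun x hx => ?_
        simp only [Finset.mem_inter] at hx
        have := hB hx.1
        simp only [Finset.mem_compl] at this
        exact this hx.2
      have h3 : p.1 \ V = ∅ := by
        rw [Finset.sdiff_eq_empty_iff_subset]; exact hA
      have h4 : p.2 \ V = p.2 := by
        rw [Finset.sdiff_eq_self_iff_disjoint]
        refine Finset.disjoint_left.2 fun x hx1 hx2 => ?_
        have := hB hx1
        simp only [Finset.mem_compl] at this
        exact this hx2
      ext <;> simp [Finset.union_inter_distrib_right, Finset.union_sdiff_distrib,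
        h1, h2, h3, h4]
  rw [key, Finset.card_product, Finset.card_powersetCard, Finset.card_powersetCard,
    Finset.card_compl, Fintype.card_fin]

lemma count_odd {h : ℕ} (V : Finset (Fin h)) (j : ℕ) :
    #((Finset.univ.powersetCard j).filter (fun S => Odd #(S ∩ V)))
      = ∑ i ∈ (Finset.range (j+1)).filter (fun i => Odd i),
          (#V).choose i * ((h - #V).choose (j - i)) := by
  rw [Finset.card_eq_sum_card_fiberwise (f := fun S => #(S ∩ V))
      (t := (Finset.range (j+1)).filter (fun i => Odd i))]
  · apply Finset.sum_congr rfl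
    intro i hi
    simp only [Finset.mem_filter, Finset.mem_range] at hi
    rw [Finset.filter_filter]
    rw [← count_inter V j i (by omega)]
    congr 1
    apply Finset.filter_congr
    intro S hS
    constructor
    · exact fun hh => hh.2
    · exact fun hh => ⟨hh ▸ hi.2, hh⟩
  · intro S hS
    simp only [Finset.mem_coe, Finset.mem_filter, Finset.mem_powersetCard_univ] at hS ⊢
    refine ⟨Finset.mem_range.2 ?_, hS.2⟩
    have : #(S ∩ V) ≤ #S := Finset.card_le_card Finset.inter_subset_left
    omega

lemma sum_reindex (l h j : ℕ) (hlh : l ≤ h) :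
    ∑ i ∈ (Finset.range (j+1)).filter (fun i => Odd i),
        l.choose i * ((h - l).choose (j - i))
    = ∑ i ∈ (Finset.Icc (max 1 (l + j - h)) (min l j)).filter (fun i => Odd i),
        l.choose i * ((h - l).choose (j - i)) := by
  rw [← Finset.sum_subset]
  · intro i hi
    simp only [Finset.mem_filter, Finset.mem_Icc, Finset.mem_range] at hi ⊢
    refine ⟨?_, hi.2⟩
    have h1 := hi.1.1
    have h2 := hi.1.2
    simp only [le_max_iff, max_le_iff, min_le_iff, le_min_iff] at *
    omega
  · intro i hi hni
    simp only [Finset.mem_filter, Finset.mem_Icc, Finset.mem_range] at hi hni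
    have hodd := hi.2
    have hi1 : 1 ≤ i := hodd.pos
    have hij : i ≤ j := by omega
    have hni' : ¬(max 1 (l + j - h) ≤ i ∧ i ≤ min l j) := fun hh => hni ⟨hh, hodd⟩
    simp only [max_le_iff, le_min_iff, not_and, not_le] at hni'
    rcases Nat.lt_or_ge l i with hli | hli
    · rw [Nat.choose_eq_zero_of_lt hli, Nat.zero_mul]
    · have : i < l + j - h := by
        by_contra hcon
        push_neg at hcon
        have := hni' ⟨hi1, hcon⟩
        omega
      have : h - l < j - i := by omega
      rw [Nat.choose_eq_zero_of_lt this, Nat.mul_zero]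

lemma hamming_eq {h : ℕ} (c : Fin h → ZMod 2) :
    hammingNorm c = #(Finset.univ.filter (fun x => c x = 1)) := by
  rw [hammingNorm]
  congr 1
  apply Finset.filter_congr
  intro x _
  have : ∀ a : ZMod 2, a ≠ 0 ↔ a = 1 := by decide
  exact this (c x)

lemma dot_eq {h : ℕ} (v c : Fin h → ZMod 2) :
    dotProduct v c
      = ((#(Finset.univ.filter (fun x => v x = 1 ∧ c x = 1)) : ℕ) : ZMod 2) := by
  rw [dotProduct, ← Finset.sum_boole]
  apply Finset.sum_congr rfl
  intro x _
  have : ∀ a b : ZMod 2, a * b = if a = 1 ∧ b = 1 then 1 else 0 := by decide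
  exact this (v x) (c x)

lemma col_count {h : ℕ} (v : Fin h → ZMod 2) (j : ℕ) :
    #(Finset.univ.filter (fun c : Fin h → ZMod 2 =>
        dotProduct v c = 1 ∧ hammingNorm c = j))
    = #((Finset.univ.powersetCard j).filter
        (fun S => Odd #(S ∩ (Finset.univ.filter (fun x => v x = 1))))) := by
  set V := Finset.univ.filter (fun x => v x = 1) with hV
  refine Finset.card_bij' (fun c _ => Finset.univ.filter (fun x => c x = 1))
    (fun S _ => fun x => if x ∈ S then 1 else 0) ?_ ?_ ?_ ?_
  · intro c hc
    simp only [Finset.mem_filter, Finset.mem_univ, true_and] at hc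
    obtain ⟨hdot, hnorm⟩ := hc
    simp only [Finset.mem_filter, Finset.mem_powersetCard_univ]
    refine ⟨by rw [← hamming_eq]; exact hnorm, ?_⟩
    have hset : Finset.univ.filter (fun x => v x = 1 ∧ c x = 1)
        = (Finset.univ.filter (fun x => c x = 1)) ∩ V := by
      ext x
      simp [hV, and_comm]
    rw [dot_eq, hset, zmod2_one_iff] at hdot
    exact hdot
  · intro S hS
    simp only [Finset.mem_filter, Finset.mem_powersetCard_univ] at hS
    obtain ⟨hcard, hodd⟩ := hS
    simp only [Finset.mem_filter, Finset.mem_univ, true_and]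
    have hset : Finset.univ.filter
        (fun x => v x = 1 ∧ (if x ∈ S then (1:ZMod 2) else 0) = 1) = S ∩ V := by
      ext x
      simp only [Finset.mem_filter, Finset.mem_univ, true_and, Finset.mem_inter, hV]
      constructor
      · rintro ⟨hv1, hite⟩
        have hxS : x ∈ S := by
          by_contra hxs
          rw [if_neg hxs] at hite
          exact absurd hite (by decide)
        exact ⟨hxS, hv1⟩
      · rintro ⟨hxS, hv1⟩
        exact ⟨hv1, by simp [hxS]⟩
    constructor
    · rw [dot_eq, hset, zmod2_one_iff]
      exact hodd
    · rw [hamming_eq]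
      rw [show (Finset.univ.filter (fun x => (if x ∈ S then (1:ZMod 2) else 0) = 1)) = S by
        ext x
        simp only [Finset.mem_filter, Finset.mem_univ, true_and]
        constructor
        · intro hx
          by_contra hxs
          rw [if_neg hxs] at hx
          exact absurd hx (by decide)
        · intro hx; rw [if_pos hx]]
      exact hcard
  · intro c hc
    funext x
    have hall : ∀ a : ZMod 2, a = 0 ∨ a = 1 := by decide
    rcases hall (c x) with h0 | h0 <;> simp [h0]
  · intro S hS
    ext x
    simp only [Finset.mem_filter, Finset.mem_univ, true_and]
    constructor
    · intro hx
      by_contra hxs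
      rw [if_neg hxs] at hx
      exact absurd hx (by decide)
    · intro hx; rw [if_pos hx]
/-- If `v ∈ F₂^h` has Hamming weight `l` with `1 ≤ l ≤ h` and a random column
`c ∈ F₂^h` is drawn according to the LT column distribution, then the probability
that the inner product `vᵀc` equals `1` is exactly
`p_l = Σ_{j=1}^{dmax} Ω_j · Σ_{i odd, max(1,l+j−h) ≤ i ≤ min(l,j)} C(l,i)·C(h−l,j−i)/C(h,j)`. -/
theorem stmt_1 (dmax h : ℕ) (Ω : ℕ → ℝ)
    (hΩpos : ∀ j ∈ Finset.Icc 1 dmax, 0 ≤ Ω j)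
    (hΩsum : ∑ j ∈ Finset.Icc 1 dmax, Ω j = 1)
    (hpos : 0 < h) (hdh : dmax ≤ h)
    (v : Fin h → ZMod 2) (l : ℕ) (hwt : hammingNorm v = l) (hl1 : 1 ≤ l) (hlh : l ≤ h) :
    ∑ c ∈ Finset.univ.filter (fun c : Fin h → ZMod 2 => dotProduct v c = 1),
      colP dmax Ω c =
    ∑ j ∈ Finset.Icc 1 dmax, Ω j *
      ∑ i ∈ (Finset.Icc (max 1 (l + j - h)) (min l j)).filter (fun i => Odd i),
        ((l.choose i : ℝ) * ((h - l).choose (j - i) : ℝ)) / (h.choose j : ℝ) := by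
  classical
  have hVcard : #(Finset.univ.filter (fun x => v x = 1)) = l := by
    rw [← hamming_eq]; exact hwt
  have hcol : ∀ c : Fin h → ZMod 2, colP dmax Ω c
      = ∑ j ∈ Finset.Icc 1 dmax,
          if hammingNorm c = j then Ω j / ((h.choose j : ℕ) : ℝ) else 0 := by
    intro c
    rw [Finset.sum_ite_eq]
    simp only [Finset.mem_Icc, colP]
  rw [Finset.sum_congr rfl (fun c _ => hcol c), Finset.sum_comm]
  apply Finset.sum_congr rfl
  intro j hj
  rw [Finset.mem_Icc] at hj
  have hjh : j ≤ h := le_trans hj.2 hdh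
  rw [← Finset.sum_filter, Finset.filter_filter, Finset.sum_const, nsmul_eq_mul]
  have hcard : #(Finset.univ.filter (fun c : Fin h → ZMod 2 =>
      dotProduct v c = 1 ∧ hammingNorm c = j))
      = ∑ i ∈ (Finset.Icc (max 1 (l + j - h)) (min l j)).filter (fun i => Odd i),
          l.choose i * ((h - l).choose (j - i)) := by
    rw [col_count, count_odd, hVcard, sum_reindex l h j hlh]
  rw [hcard, Nat.cast_sum, Finset.sum_mul, Finset.mul_sum]
  apply Finset.sum_congr rfl
  intro i _
  push_cast
  ring
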